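/- If f : ℝⁿ → ℂ is continuous and of positive type, then lim_{T→∞} (vol[−T,T]ⁿ)^{−2} ∫_{[−T,T]ⁿ} ∫_{[−T,T]ⁿ} f(x − y) dy dx = M(f), where M(f) = lim_{T→∞} (vol[−T,T]ⁿ)^{−1} ∫_{[−T,T]ⁿ} f(x) dx is the mean value of f. In particular, if ν is the finite Borel measure with f(x) = ∫ e^{iu·x} dν(u) (Bochner's theorem), then both limits equal ν({0}). -/

import Mathlib

open MeasureTheory RealInnerProductSpace ComplexOrder

/-- The cube `[−T, T]ⁿ` in `ℝⁿ`. -/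
def cube (n : ℕ) (T : ℝ) : Set (EuclideanSpace ℝ (Fin n)) :=
  {x | ∀ i, x i ∈ Set.Icc (-T) T}

open Filter

section Aux

noncomputable def Sfun (T u : ℝ) : ℂ := ∫ t in Set.Icc (-T) T, Complex.exp (Complex.I * u * t)

noncomputable def SS (T u : ℝ) : ℂ := (2 * T : ℂ)⁻¹ * Sfun T u

theorem Sfun_eq_intervalIntegral (T u : ℝ) (hT : 0 ≤ T) :
    Sfun T u = ∫ t in (-T)..T, Complex.exp (Complex.I * u * t) := by
  rw [Sfun, intervalIntegral.integral_of_le (by linarith), integral_Icc_eq_integral_Ioc]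

theorem Sfun_zero (T : ℝ) (hT : 0 ≤ T) : Sfun T 0 = 2 * T := by
  rw [Sfun]
  simp [Real.volume_Icc]
  rw [max_eq_left (by linarith)]
  push_cast; ring

theorem norm_exp_I_mul_real (r : ℝ) : ‖Complex.exp (Complex.I * r)‖ = 1 := by
  rw [Complex.norm_exp]
  simp [Complex.mul_re]

theorem norm_exp_I_mul (u t : ℝ) : ‖Complex.exp (Complex.I * u * t)‖ = 1 := by
  rw [Complex.norm_exp]
  simp [Complex.mul_re]

theorem cont_Sfun_integrand (u : ℝ) : Continuous fun t : ℝ => Complex.exp (Complex.I * u * t) := by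
  fun_prop

theorem norm_Sfun_le (T u : ℝ) (hT : 0 ≤ T) : ‖Sfun T u‖ ≤ 2 * T := by
  have := norm_setIntegral_le_of_norm_le_const (μ := volume) (s := Set.Icc (-T) T)
    (f := fun t : ℝ => Complex.exp (Complex.I * u * t)) (C := 1)
    (by simp [Real.volume_Icc])
    (fun t _ => le_of_eq (norm_exp_I_mul u t))
  rw [measureReal_def, Real.volume_Icc, ENNReal.toReal_ofReal (by linarith)] at this
  calc ‖Sfun T u‖ ≤ 1 * (T - -T) := this
  _ = 2 * T := by ring

theorem norm_Sfun_le_of_ne (T u : ℝ) (hT : 0 ≤ T) (hu : u ≠ 0) : ‖Sfun T u‖ ≤ 2 / |u| := by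
  have hc : (Complex.I * u) ≠ 0 := by
    simp [Complex.I_ne_zero, Complex.ofReal_eq_zero, hu]
  rw [Sfun_eq_intervalIntegral T u hT, integral_exp_mul_complex hc, norm_div]
  have h1 : ‖Complex.exp (Complex.I * u * (T:ℝ)) - Complex.exp (Complex.I * u * ((-T : ℝ):ℝ))‖ ≤ 2 := by
    calc _ ≤ ‖Complex.exp (Complex.I * u * (T:ℝ))‖ + ‖Complex.exp (Complex.I * u * ((-T:ℝ):ℝ))‖ := norm_sub_le _ _
    _ ≤ 2 := by rw [norm_exp_I_mul, norm_exp_I_mul]; norm_num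
  have h2 : ‖Complex.I * (u:ℂ)‖ = |u| := by
    rw [norm_mul, Complex.norm_I, Complex.norm_real, one_mul, Real.norm_eq_abs]
  rw [h2]
  gcongr

theorem norm_two_T_inv (T : ℝ) (hT : 0 < T) : ‖(2 * (T:ℂ))⁻¹‖ = (2 * T)⁻¹ := by
  rw [norm_inv]
  have : (2 * (T:ℂ)) = ((2*T:ℝ):ℂ) := by push_cast; ring
  rw [this, Complex.norm_real, Real.norm_eq_abs, abs_of_pos (by positivity)]

theorem SS_zero (T : ℝ) (hT : 0 < T) : SS T 0 = 1 := by
  rw [SS, Sfun_zero T hT.le, inv_mul_cancel₀]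
  have : (2 * T : ℝ) ≠ 0 := by positivity
  exact_mod_cast fun h => this (by exact_mod_cast h)

theorem norm_SS_le_one (T u : ℝ) (hT : 0 < T) : ‖SS T u‖ ≤ 1 := by
  rw [SS, norm_mul, norm_two_T_inv T hT]
  calc (2*T)⁻¹ * ‖Sfun T u‖ ≤ (2*T)⁻¹ * (2*T) :=
        mul_le_mul_of_nonneg_left (norm_Sfun_le T u hT.le) (by positivity)
  _ = 1 := by field_simp

theorem SS_tendsto_zero (u : ℝ) (hu : u ≠ 0) :
    Tendsto (fun T => SS T u) atTop (nhds 0) := by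
  apply squeeze_zero_norm' (a := fun T : ℝ => (2*T)⁻¹ * (2/|u|))
  · filter_upwards [eventually_gt_atTop 0] with T hT
    rw [SS, norm_mul, norm_two_T_inv T hT]
    exact mul_le_mul_of_nonneg_left (norm_Sfun_le_of_ne T u hT.le hu) (by positivity)
  · have h1 : Tendsto (fun T:ℝ => 2*T) atTop atTop :=
      Tendsto.const_mul_atTop (by norm_num) tendsto_id
    have := (h1.inv_tendsto_atTop).mul_const (2/|u|)
    simpa using this

theorem SS_measurable (T : ℝ) : Measurable fun u => SS T u := by
  apply Measurable.const_mul
  have : StronglyMeasurable fun u : ℝ => Sfun T u := by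
    apply MeasureTheory.StronglyMeasurable.integral_prod_right
      (f := fun (u : ℝ) (t : ℝ) => Complex.exp (Complex.I * u * t))
    apply Continuous.stronglyMeasurable
    fun_prop
  exact this.measurable

variable {n : ℕ}

/-- product of the one-dimensional averaged exponential integrals -/
noncomputable def Ffun (n : ℕ) (T : ℝ) (u : EuclideanSpace ℝ (Fin n)) : ℂ :=
  ∏ i, SS T (u i)

theorem cube_eq (n : ℕ) (T : ℝ) :
    cube n T = (MeasurableEquiv.toLp 2 (Fin n → ℝ)).symm ⁻¹'
      (Set.pi Set.univ fun _ => Set.Icc (-T) T) := by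
  ext x
  simp only [cube, Set.mem_setOf_eq, Set.mem_preimage, Set.mem_univ_pi]
  rfl

theorem cube_measurableSet (n : ℕ) (T : ℝ) : MeasurableSet (cube n T) := by
  rw [cube_eq]
  exact (MeasurableEquiv.toLp 2 (Fin n → ℝ)).symm.measurable
    (MeasurableSet.univ_pi fun _ => measurableSet_Icc)

theorem vol_cube (n : ℕ) (T : ℝ) : volume (cube n T) = ENNReal.ofReal (2*T) ^ n := by
  rw [cube_eq,
    (EuclideanSpace.volume_preserving_symm_measurableEquiv_toLp (Fin n)).measure_preimage
      ((MeasurableSet.univ_pi fun _ => measurableSet_Icc).nullMeasurableSet)]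
  rw [volume_pi_pi]
  simp [Real.volume_Icc]
  ring_nf
  rw [ENNReal.ofReal_mul' (by norm_num : (0:ℝ) ≤ 2), mul_pow]
  simp

theorem vol_cube_toReal (n : ℕ) (T : ℝ) (hT : 0 ≤ T) :
    (volume (cube n T)).toReal = (2*T) ^ n := by
  rw [vol_cube, ENNReal.toReal_pow, ENNReal.toReal_ofReal (by linarith)]

instance cube_finite (n : ℕ) (T : ℝ) : IsFiniteMeasure (volume.restrict (cube n T)) := by
  constructor
  rw [Measure.restrict_apply_univ, vol_cube]
  exact ENNReal.pow_lt_top ENNReal.ofReal_lt_top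

theorem integral_cube_prod (n : ℕ) (T : ℝ) (h : Fin n → ℝ → ℂ) :
    ∫ x in cube n T, ∏ i, h i (x i) = ∏ i, ∫ t in Set.Icc (-T) T, h i t := by
  rw [cube_eq]
  have key := (EuclideanSpace.volume_preserving_symm_measurableEquiv_toLp (Fin n)).setIntegral_preimage_emb
    (MeasurableEquiv.toLp 2 (Fin n → ℝ)).symm.measurableEmbedding
    (fun y => ∏ i, h i (y i)) (Set.pi Set.univ fun _ => Set.Icc (-T) T)
  rw [show (∫ x in (MeasurableEquiv.toLp 2 (Fin n → ℝ)).symm ⁻¹' (Set.pi Set.univ fun _ => Set.Icc (-T) T), ∏ i, h i (x i)) = ∫ x in (MeasurableEquiv.toLp 2 (Fin n → ℝ)).symm ⁻¹' (Set.pi Set.univ fun _ => Set.Icc (-T) T), ∏ i, h i ((MeasurableEquiv.toLp 2 (Fin n → ℝ)).symm x i) from rfl, key]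
  rw [← integral_indicator (MeasurableSet.univ_pi fun _ => measurableSet_Icc)]
  have hind : ∀ y : Fin n → ℝ, (Set.pi Set.univ fun _ => Set.Icc (-T) T).indicator
      (fun y => ∏ i, h i (y i)) y = ∏ i, (Set.Icc (-T) T).indicator (h i) (y i) := by
    intro y
    by_cases hy : y ∈ Set.pi Set.univ fun _ => Set.Icc (-T) T
    · rw [Set.indicator_of_mem hy]
      exact Finset.prod_congr rfl fun i _ => (Set.indicator_of_mem (hy i (Set.mem_univ i)) _).symm
    · rw [Set.indicator_of_notMem hy]
      obtain ⟨j, hj⟩ := not_forall.mp (Set.mem_univ_pi.not.mp hy)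
      exact (Finset.prod_eq_zero (Finset.mem_univ j) (Set.indicator_of_notMem hj _)).symm
  simp_rw [hind]
  rw [volume_pi, MeasureTheory.integral_fintype_prod_eq_prod (ι := Fin n) (fun i => (Set.Icc (-T) T).indicator (h i))]
  simp_rw [integral_indicator measurableSet_Icc]

theorem exp_inner_eq_prod (u x : EuclideanSpace ℝ (Fin n)) :
    Complex.exp (Complex.I * (⟪u, x⟫ : ℝ)) = ∏ i, Complex.exp (Complex.I * (u i) * (x i)) := by
  rw [← Complex.exp_sum]
  congr 1
  rw [PiLp.inner_apply]
  push_cast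
  rw [Finset.mul_sum]
  congr 1; ext i
  simp [RCLike.inner_apply, mul_assoc]
  ring

theorem integral_exp_cube (T : ℝ) (hT : 0 < T) (u : EuclideanSpace ℝ (Fin n)) :
    ∫ x in cube n T, Complex.exp (Complex.I * (⟪u, x⟫ : ℝ))
      = (2*T : ℂ)^n * Ffun n T u := by
  simp_rw [exp_inner_eq_prod]
  rw [integral_cube_prod n T (fun i t => Complex.exp (Complex.I * (u i) * t))]
  have h2T : (2 * (T:ℂ)) ≠ 0 := by
    simp only [ne_eq, mul_eq_zero, OfNat.ofNat_ne_zero, Complex.ofReal_eq_zero, false_or]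
    exact_mod_cast hT.ne'
  have heq : ∀ i : Fin n, (∫ t in Set.Icc (-T) T, Complex.exp (Complex.I * (u i) * t))
      = (2*T:ℂ) * SS T (u i) := by
    intro i; rw [SS, ← mul_assoc, mul_inv_cancel₀ h2T, one_mul, Sfun]
  simp_rw [heq]
  rw [Ffun, Finset.prod_mul_distrib, Finset.prod_const, Finset.card_univ, Fintype.card_fin]

theorem norm_Ffun_le_one (T : ℝ) (hT : 0 < T) (u : EuclideanSpace ℝ (Fin n)) :
    ‖Ffun n T u‖ ≤ 1 := by
  rw [Ffun]
  calc ‖∏ i, SS T (u i)‖ = ∏ i, ‖SS T (u i)‖ := norm_prod _ _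
  _ ≤ 1 := Finset.prod_le_one (fun i _ => norm_nonneg _) (fun i _ => norm_SS_le_one T (u i) hT)

theorem Ffun_zero (T : ℝ) (hT : 0 < T) : Ffun n T 0 = 1 := by
  rw [Ffun]
  have : ∀ i : Fin n, (0 : EuclideanSpace ℝ (Fin n)) i = 0 := fun i => rfl
  simp only [this, SS_zero T hT, Finset.prod_const_one]

theorem Ffun_tendsto_zero (u : EuclideanSpace ℝ (Fin n)) (hu : u ≠ 0) :
    Tendsto (fun T => Ffun n T u) atTop (nhds 0) := by
  obtain ⟨j, hj⟩ : ∃ j, u j ≠ 0 := by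
    by_contra h
    push_neg at h
    exact hu (PiLp.ext h)
  apply squeeze_zero_norm' (a := fun T => ‖SS T (u j)‖)
  · filter_upwards [eventually_gt_atTop 0] with T hT
    rw [Ffun]
    calc ‖∏ i, SS T (u i)‖ = ∏ i, ‖SS T (u i)‖ := norm_prod _ _
    _ = ‖SS T (u j)‖ * ∏ i ∈ Finset.univ.erase j, ‖SS T (u i)‖ :=
        (Finset.mul_prod_erase _ _ (Finset.mem_univ j)).symm
    _ ≤ ‖SS T (u j)‖ * 1 := by
        apply mul_le_mul_of_nonneg_left _ (norm_nonneg _)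
        exact Finset.prod_le_one (fun i _ => norm_nonneg _) (fun i _ => norm_SS_le_one T (u i) hT)
    _ = ‖SS T (u j)‖ := mul_one _
  · simpa using (SS_tendsto_zero (u j) hj).norm

theorem Ffun_measurable (T : ℝ) : Measurable (Ffun n T) := by
  apply Finset.measurable_prod
  intro i _
  exact (SS_measurable T).comp ((measurable_pi_apply i).comp (MeasurableEquiv.toLp 2 (Fin n → ℝ)).symm.measurable)

end Aux

section Main

variable {n : ℕ}

theorem dct_aux (ν : Measure (EuclideanSpace ℝ (Fin n))) [IsFiniteMeasure ν]
    (G : ℝ → EuclideanSpace ℝ (Fin n) → ℂ)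
    (hmeas : ∀ T : ℝ, 0 < T → AEStronglyMeasurable (G T) ν)
    (hbound : ∀ T : ℝ, 0 < T → ∀ u, ‖G T u‖ ≤ 1)
    (hzero : ∀ u, u ≠ 0 → Tendsto (fun T => G T u) atTop (nhds 0))
    (hone : ∀ T : ℝ, 0 < T → G T 0 = 1) :
    Tendsto (fun T => ∫ u, G T u ∂ν) atTop (nhds ((ν {0}).toReal : ℂ)) := by
  have hlim : Tendsto (fun T => ∫ u, G T u ∂ν) atTop
      (nhds (∫ u, Set.indicator {0} (fun _ => (1:ℂ)) u ∂ν)) := by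
    apply tendsto_integral_filter_of_dominated_convergence (bound := fun _ => (1:ℝ))
    · filter_upwards [eventually_gt_atTop 0] with T hT; exact hmeas T hT
    · filter_upwards [eventually_gt_atTop 0] with T hT
      exact Filter.Eventually.of_forall fun u => hbound T hT u
    · exact integrable_const 1
    · apply Filter.Eventually.of_forall
      intro u
      by_cases hu : u = 0
      · subst hu
        rw [Set.indicator_of_mem (Set.mem_singleton _)]
        apply Tendsto.congr' _ tendsto_const_nhds
        filter_upwards [eventually_gt_atTop 0] with T hT
        exact (hone T hT).symm
      · rw [Set.indicator_of_notMem (by simpa using hu)]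
        exact hzero u hu
  rwa [integral_indicator_const (1:ℂ) (measurableSet_singleton 0),
    Complex.real_smul, mul_one] at hlim

theorem single_integral (f : EuclideanSpace ℝ (Fin n) → ℂ)
    (ν : Measure (EuclideanSpace ℝ (Fin n))) [IsFiniteMeasure ν]
    (hrep : ∀ x, f x = ∫ u, Complex.exp (Complex.I * (⟪u, x⟫ : ℝ)) ∂ν)
    (T : ℝ) (hT : 0 < T) :
    ∫ x in cube n T, f x = (2*T : ℂ)^n * ∫ u, Ffun n T u ∂ν := by
  have hint : Integrable (Function.uncurry fun (x u : EuclideanSpace ℝ (Fin n)) =>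
      Complex.exp (Complex.I * (⟪u, x⟫:ℝ))) ((volume.restrict (cube n T)).prod ν) := by
    apply Integrable.mono' (integrable_const 1)
    · apply Continuous.aestronglyMeasurable
      apply Complex.continuous_exp.comp
      apply Continuous.mul continuous_const
      apply Complex.continuous_ofReal.comp
      exact continuous_inner.comp (continuous_snd.prodMk continuous_fst)
    · exact Filter.Eventually.of_forall fun p => le_of_eq (norm_exp_I_mul_real _)
  calc ∫ x in cube n T, f x
      = ∫ x in cube n T, ∫ u, Complex.exp (Complex.I * (⟪u,x⟫:ℝ)) ∂ν := by simp_rw [hrep]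
  _ = ∫ u, (∫ x in cube n T, Complex.exp (Complex.I * (⟪u,x⟫:ℝ))) ∂ν :=
      integral_integral_swap hint
  _ = ∫ u, (2*T:ℂ)^n * Ffun n T u ∂ν := by
      apply integral_congr_ae
      exact Filter.Eventually.of_forall fun u => integral_exp_cube T hT u
  _ = (2*T:ℂ)^n * ∫ u, Ffun n T u ∂ν := integral_const_mul _ _

theorem inner_double (f : EuclideanSpace ℝ (Fin n) → ℂ)
    (ν : Measure (EuclideanSpace ℝ (Fin n))) [IsFiniteMeasure ν]
    (hrep : ∀ x, f x = ∫ u, Complex.exp (Complex.I * (⟪u, x⟫ : ℝ)) ∂ν)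
    (T : ℝ) (hT : 0 < T) (x : EuclideanSpace ℝ (Fin n)) :
    ∫ y in cube n T, f (x - y)
      = (2*T : ℂ)^n * ∫ u, Complex.exp (Complex.I * (⟪u,x⟫:ℝ)) * Ffun n T (-u) ∂ν := by
  have hsplit : ∀ (u y : EuclideanSpace ℝ (Fin n)),
      Complex.exp (Complex.I * (⟪u, x - y⟫:ℝ))
        = Complex.exp (Complex.I * (⟪u,x⟫:ℝ)) * Complex.exp (Complex.I * (⟪-u,y⟫:ℝ)) := by
    intro u y
    rw [← Complex.exp_add]
    congr 1
    rw [inner_sub_right, inner_neg_left]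
    push_cast
    ring
  have hint : Integrable (Function.uncurry fun (y u : EuclideanSpace ℝ (Fin n)) =>
      Complex.exp (Complex.I * (⟪u,x⟫:ℝ)) * Complex.exp (Complex.I * (⟪-u,y⟫:ℝ)))
      ((volume.restrict (cube n T)).prod ν) := by
    apply Integrable.mono' (integrable_const 1)
    · apply Continuous.aestronglyMeasurable
      apply Continuous.mul
      · apply Complex.continuous_exp.comp
        apply Continuous.mul continuous_const
        apply Complex.continuous_ofReal.comp
        exact continuous_inner.comp ((continuous_snd.prodMk continuous_const))
      · apply Complex.continuous_exp.comp
        apply Continuous.mul continuous_const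
        apply Complex.continuous_ofReal.comp
        exact continuous_inner.comp ((continuous_snd.neg).prodMk continuous_fst)
    · apply Filter.Eventually.of_forall
      intro p
      have : ‖Function.uncurry (fun (y u : EuclideanSpace ℝ (Fin n)) =>
          Complex.exp (Complex.I * (⟪u,x⟫:ℝ)) * Complex.exp (Complex.I * (⟪-u,y⟫:ℝ))) p‖ = 1 := by
        rw [Function.uncurry, norm_mul, norm_exp_I_mul_real, norm_exp_I_mul_real, mul_one]
      rw [this]
  calc ∫ y in cube n T, f (x - y)
      = ∫ y in cube n T, ∫ u, Complex.exp (Complex.I * (⟪u,x⟫:ℝ))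
          * Complex.exp (Complex.I * (⟪-u,y⟫:ℝ)) ∂ν := by simp_rw [hrep, hsplit]
  _ = ∫ u, (∫ y in cube n T, Complex.exp (Complex.I * (⟪u,x⟫:ℝ))
          * Complex.exp (Complex.I * (⟪-u,y⟫:ℝ))) ∂ν := integral_integral_swap hint
  _ = ∫ u, Complex.exp (Complex.I * (⟪u,x⟫:ℝ)) * ((2*T:ℂ)^n * Ffun n T (-u)) ∂ν := by
      apply integral_congr_ae
      apply Filter.Eventually.of_forall
      intro u
      beta_reduce
      rw [integral_const_mul, integral_exp_cube T hT (-u)]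
  _ = (2*T : ℂ)^n * ∫ u, Complex.exp (Complex.I * (⟪u,x⟫:ℝ)) * Ffun n T (-u) ∂ν := by
      rw [← integral_const_mul]
      apply integral_congr_ae
      apply Filter.Eventually.of_forall
      intro u
      ring

theorem double_integral (f : EuclideanSpace ℝ (Fin n) → ℂ)
    (ν : Measure (EuclideanSpace ℝ (Fin n))) [IsFiniteMeasure ν]
    (hrep : ∀ x, f x = ∫ u, Complex.exp (Complex.I * (⟪u, x⟫ : ℝ)) ∂ν)
    (T : ℝ) (hT : 0 < T) :
    ∫ x in cube n T, ∫ y in cube n T, f (x - y)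
      = (2*T : ℂ)^n * ((2*T : ℂ)^n * ∫ u, Ffun n T u * Ffun n T (-u) ∂ν) := by
  have hint : Integrable (Function.uncurry fun (x u : EuclideanSpace ℝ (Fin n)) =>
      Complex.exp (Complex.I * (⟪u,x⟫:ℝ)) * Ffun n T (-u))
      ((volume.restrict (cube n T)).prod ν) := by
    apply Integrable.mono' (integrable_const 1)
    · apply AEStronglyMeasurable.mul
      · apply Continuous.aestronglyMeasurable
        apply Complex.continuous_exp.comp
        apply Continuous.mul continuous_const
        apply Complex.continuous_ofReal.comp
        exact continuous_inner.comp (continuous_snd.prodMk continuous_fst)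
      · exact (((Ffun_measurable T).comp measurable_neg).comp measurable_snd).aestronglyMeasurable
    · apply Filter.Eventually.of_forall
      intro p
      have : ‖Function.uncurry (fun (x u : EuclideanSpace ℝ (Fin n)) =>
          Complex.exp (Complex.I * (⟪u,x⟫:ℝ)) * Ffun n T (-u)) p‖ = ‖Ffun n T (-p.2)‖ := by
        rw [Function.uncurry, norm_mul, norm_exp_I_mul_real, one_mul]
      rw [this]
      exact norm_Ffun_le_one T hT _
  calc ∫ x in cube n T, ∫ y in cube n T, f (x - y)
      = ∫ x in cube n T, (2*T : ℂ)^n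
          * ∫ u, Complex.exp (Complex.I * (⟪u,x⟫:ℝ)) * Ffun n T (-u) ∂ν := by
        apply integral_congr_ae
        exact Filter.Eventually.of_forall fun x => inner_double f ν hrep T hT x
  _ = (2*T : ℂ)^n * ∫ x in cube n T,
          ∫ u, Complex.exp (Complex.I * (⟪u,x⟫:ℝ)) * Ffun n T (-u) ∂ν := integral_const_mul _ _
  _ = (2*T : ℂ)^n * ∫ u, (∫ x in cube n T,
          Complex.exp (Complex.I * (⟪u,x⟫:ℝ)) * Ffun n T (-u)) ∂ν := by
        rw [integral_integral_swap hint]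
  _ = (2*T : ℂ)^n * ∫ u, ((2*T : ℂ)^n * Ffun n T u) * Ffun n T (-u) ∂ν := by
        congr 1
        apply integral_congr_ae
        apply Filter.Eventually.of_forall
        intro u
        beta_reduce
        rw [integral_mul_const, integral_exp_cube T hT u]
  _ = (2*T : ℂ)^n * ((2*T : ℂ)^n * ∫ u, Ffun n T u * Ffun n T (-u) ∂ν) := by
        congr 1
        rw [← integral_const_mul]
        apply integral_congr_ae
        exact Filter.Eventually.of_forall fun u => by beta_reduce; ring

end Main

theorem stmt_16 (n : ℕ) (f : EuclideanSpace ℝ (Fin n) → ℂ)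
    (hcont : Continuous f)
    (hpt : ∀ U : Finset (EuclideanSpace ℝ (Fin n)),
      Matrix.PosSemidef (Matrix.of fun x y : ↥U => f ((x : EuclideanSpace ℝ (Fin n)) - y)))
    (ν : Measure (EuclideanSpace ℝ (Fin n))) [IsFiniteMeasure ν]
    (hrep : ∀ x, f x = ∫ u, Complex.exp (Complex.I * (⟪u, x⟫ : ℝ)) ∂ν) :
    Filter.Tendsto
      (fun T : ℝ => (((volume (cube n T)).toReal : ℂ) ^ 2)⁻¹ *
        ∫ x in cube n T, ∫ y in cube n T, f (x - y))
      Filter.atTop (nhds ((ν {0}).toReal : ℂ)) ∧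
    Filter.Tendsto
      (fun T : ℝ => (((volume (cube n T)).toReal : ℂ))⁻¹ * ∫ x in cube n T, f x)
      Filter.atTop (nhds ((ν {0}).toReal : ℂ)) := by
  have h2T : ∀ T : ℝ, 0 < T → (2*(T:ℂ))^n ≠ 0 := by
    intro T hT
    have he : (2*(T:ℂ)) = ((2*T:ℝ):ℂ) := by push_cast; ring
    rw [he]
    exact pow_ne_zero _ (Complex.ofReal_ne_zero.mpr (by positivity))
  have hc : ∀ T : ℝ, 0 < T → ((volume (cube n T)).toReal : ℂ) = (2*(T:ℂ))^n := by
    intro T hT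
    rw [vol_cube_toReal n T hT.le]
    push_cast
    ring
  constructor
  · have hdct := dct_aux ν (fun T u => Ffun n T u * Ffun n T (-u))
      (fun T _ => ((Ffun_measurable T).mul
        ((Ffun_measurable T).comp measurable_neg)).aestronglyMeasurable)
      (fun T hT u => by
        rw [norm_mul]
        calc ‖Ffun n T u‖ * ‖Ffun n T (-u)‖ ≤ 1 * 1 :=
              mul_le_mul (norm_Ffun_le_one T hT u) (norm_Ffun_le_one T hT (-u))
                (norm_nonneg _) zero_le_one
        _ = 1 := one_mul 1)
      (fun u hu => by
        simpa using (Ffun_tendsto_zero u hu).mul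
          (Ffun_tendsto_zero (-u) (neg_ne_zero.mpr hu)))
      (fun T hT => by beta_reduce; rw [neg_zero, Ffun_zero T hT, one_mul])
    apply Filter.Tendsto.congr' _ hdct
    filter_upwards [Filter.eventually_gt_atTop 0] with T hT
    rw [double_integral f ν hrep T hT, hc T hT]
    field_simp
  · have hdct := dct_aux ν (fun T u => Ffun n T u)
      (fun T _ => (Ffun_measurable T).aestronglyMeasurable)
      (fun T hT u => norm_Ffun_le_one T hT u)
      (fun u hu => Ffun_tendsto_zero u hu)
      (fun T hT => Ffun_zero T hT)
    apply Filter.Tendsto.congr' _ hdct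
    filter_upwards [Filter.eventually_gt_atTop 0] with T hT
    rw [single_integral f ν hrep T hT, hc T hT, ← mul_assoc,
      inv_mul_cancel₀ (h2T T hT), one_mul]
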